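/- The function u(r,t) = t^{-1/3} F(r·t^{-1/6}) with F(y) = (1/48)·max(d² - y², 0)², for any d > 0, is a solution of the radial Monge–Ampère equation u_t = -(1/r)·u_r·u_rr for all t > 0 and all r > 0 with r·t^{-1/6} ≠ d. -/

import Mathlib

open Real Filter

/-- The source-type similarity solution `u(r,t) = t^{-1/3} F(r t^{-1/6})` with
`F(y) = (1/48)(d² - y²)₊²` solves the radial Monge–Ampère equation
`u_t = -(1/r) u_r u_rr` for all `t > 0`, `r > 0` with `r t^{-1/6} ≠ d`. -/
theorem stmt3 (d : ℝ) (hd : 0 < d)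
    (F : ℝ → ℝ) (hF : ∀ y, F y = (1 / 48) * (max (d ^ 2 - y ^ 2) 0) ^ 2)
    (u : ℝ → ℝ → ℝ)
    (hu : ∀ r t : ℝ, u r t = t ^ (-(1 / 3) : ℝ) * F (r * t ^ (-(1 / 6) : ℝ))) :
    ∀ r t : ℝ, 0 < r → 0 < t → r * t ^ (-(1 / 6) : ℝ) ≠ d →
      deriv (fun s => u r s) t
        = -(1 / r) * deriv (fun ρ => u ρ t) r
            * deriv (fun ρ => deriv (fun ρ' => u ρ' t) ρ) r := by
  intro r t hr ht hne
  have ht0 : t ≠ 0 := ht.ne'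
  have hr0 : r ≠ 0 := hr.ne'
  set c : ℝ := t ^ (-(1 / 6) : ℝ) with hc
  set a : ℝ := t ^ (-(1 / 3) : ℝ) with ha
  have hcpos : 0 < c := Real.rpow_pos_of_pos ht _
  have hapos : 0 < a := Real.rpow_pos_of_pos ht _
  have hc2 : c ^ 2 = a := by
    rw [hc, ha, ← Real.rpow_natCast (t ^ (-(1 / 6) : ℝ)) 2, ← Real.rpow_mul ht.le]
    norm_num
  have ha4 : t ^ ((-(1 / 3) : ℝ) - 1) = a ^ 4 := by
    rw [ha, ← Real.rpow_natCast (t ^ (-(1 / 3) : ℝ)) 4, ← Real.rpow_mul ht.le]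
    norm_num
  rcases lt_or_gt_of_ne hne with hlt | hgt
  · -- inner case : r * c < d
    set S : Set ℝ := {ρ | 0 < ρ ∧ ρ * c < d} with hSdef
    have hSopen : IsOpen S := by
      have : S = Set.Ioi 0 ∩ (fun ρ => ρ * c) ⁻¹' Set.Iio d := rfl
      rw [this]
      exact isOpen_Ioi.inter (isOpen_Iio.preimage (continuous_id.mul continuous_const))
    have hrS : r ∈ S := ⟨hr, hlt⟩
    have hU : ∀ ρ ∈ S, u ρ t = a / 48 * (d ^ 2 - ρ ^ 2 * c ^ 2) ^ 2 := by
      intro ρ hρ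
      have h1 : 0 ≤ d ^ 2 - (ρ * c) ^ 2 := by nlinarith [mul_pos hρ.1 hcpos, hρ.2]
      rw [hu, hF, ← hc, ← ha, max_eq_left h1]
      ring
    have hderiv1 : ∀ ρ ∈ S, deriv (fun ρ' => u ρ' t) ρ
        = -(a * c ^ 2 / 12) * (ρ * d ^ 2 - ρ ^ 3 * c ^ 2) := by
      intro ρ hρ
      have heq : (fun ρ' => u ρ' t)
          =ᶠ[nhds ρ] fun ρ' => a / 48 * (d ^ 2 - ρ' ^ 2 * c ^ 2) ^ 2 :=
        Filter.eventuallyEq_of_mem (hSopen.mem_nhds hρ) (fun x hx => hU x hx)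
      rw [heq.deriv_eq]
      have h1 : HasDerivAt (fun ρ' : ℝ => d ^ 2 - ρ' ^ 2 * c ^ 2) (-(2 * ρ * c ^ 2)) ρ := by
        have := ((hasDerivAt_pow 2 ρ).mul_const (c ^ 2)).const_sub (d ^ 2)
        refine this.congr_deriv ?_
        push_cast
        ring
      have h2 : HasDerivAt (fun ρ' : ℝ => a / 48 * (d ^ 2 - ρ' ^ 2 * c ^ 2) ^ 2)
          (-(a * c ^ 2 / 12) * (ρ * d ^ 2 - ρ ^ 3 * c ^ 2)) ρ := by
        have := (h1.pow 2).const_mul (a / 48)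
        refine this.congr_deriv ?_
        push_cast
        ring
      exact h2.deriv
    have hderiv2 : deriv (fun ρ => deriv (fun ρ' => u ρ' t) ρ) r
        = -(a * c ^ 2 / 12) * (d ^ 2 - 3 * r ^ 2 * c ^ 2) := by
      have heq : (fun ρ => deriv (fun ρ' => u ρ' t) ρ)
          =ᶠ[nhds r] fun ρ => -(a * c ^ 2 / 12) * (ρ * d ^ 2 - ρ ^ 3 * c ^ 2) :=
        Filter.eventuallyEq_of_mem (hSopen.mem_nhds hrS) (fun x hx => hderiv1 x hx)
      rw [heq.deriv_eq]
      have h1 : HasDerivAt (fun ρ : ℝ => ρ * d ^ 2 - ρ ^ 3 * c ^ 2)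
          (d ^ 2 - 3 * r ^ 2 * c ^ 2) r := by
        have := ((hasDerivAt_id r).mul_const (d ^ 2)).sub ((hasDerivAt_pow 3 r).mul_const (c ^ 2))
        refine this.congr_deriv ?_
        push_cast
        ring
      exact (h1.const_mul (-(a * c ^ 2 / 12))).deriv
    have hT : deriv (fun s => u r s) t
        = a ^ 4 / 144 * (d ^ 2 - r ^ 2 * a) * (-(d ^ 2 - r ^ 2 * a) + 2 * r ^ 2 * a) := by
      have hcont : ContinuousAt (fun s : ℝ => r * s ^ (-(1 / 6) : ℝ)) t :=
        continuousAt_const.mul (Real.continuousAt_rpow_const t _ (Or.inl ht0))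
      have hlt' : (fun s : ℝ => r * s ^ (-(1 / 6) : ℝ)) t < (fun _ : ℝ => d) t := hlt
      have hev := hcont.eventually_lt continuousAt_const hlt'
      have heq : (fun s => u r s)
          =ᶠ[nhds t] fun s => s ^ (-(1 / 3) : ℝ) / 48
            * (d ^ 2 - r ^ 2 * s ^ (-(1 / 3) : ℝ)) ^ 2 := by
        filter_upwards [hev, Ioi_mem_nhds ht] with s hs hspos
        have hs0 : (0:ℝ) < s := hspos
        have hsc : (0:ℝ) < s ^ (-(1 / 6) : ℝ) := Real.rpow_pos_of_pos hs0 _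
        have hsq : (s ^ (-(1 / 6) : ℝ)) ^ 2 = s ^ (-(1 / 3) : ℝ) := by
          rw [← Real.rpow_natCast (s ^ (-(1 / 6) : ℝ)) 2, ← Real.rpow_mul hs0.le]
          norm_num
        have h1 : 0 ≤ d ^ 2 - (r * s ^ (-(1 / 6) : ℝ)) ^ 2 := by nlinarith [mul_pos hr hsc, hs]
        rw [hu, hF, max_eq_left h1, mul_pow, hsq]
        ring
      rw [heq.deriv_eq]
      have hp : HasDerivAt (fun s : ℝ => s ^ (-(1 / 3) : ℝ))
          (-(1 / 3) * t ^ ((-(1 / 3) : ℝ) - 1)) t :=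
        Real.hasDerivAt_rpow_const (Or.inl ht0)
      have hinner : HasDerivAt (fun s : ℝ => d ^ 2 - r ^ 2 * s ^ (-(1 / 3) : ℝ))
          (-(r ^ 2 * (-(1 / 3) * t ^ ((-(1 / 3) : ℝ) - 1)))) t :=
        (hp.const_mul (r ^ 2)).const_sub (d ^ 2)
      have hfull := (hp.div_const 48).mul (hinner.pow 2)
      have : deriv (fun s : ℝ => s ^ (-(1 / 3) : ℝ) / 48
            * (d ^ 2 - r ^ 2 * s ^ (-(1 / 3) : ℝ)) ^ 2) t
          = -(1 / 3) * t ^ ((-(1 / 3) : ℝ) - 1) / 48 * (d ^ 2 - r ^ 2 * t ^ (-(1 / 3) : ℝ)) ^ 2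
            + t ^ (-(1 / 3) : ℝ) / 48 * ((2 : ℕ) * (d ^ 2 - r ^ 2 * t ^ (-(1 / 3) : ℝ)) ^ (2 - 1)
              * -(r ^ 2 * (-(1 / 3) * t ^ ((-(1 / 3) : ℝ) - 1)))) := hfull.deriv
      rw [this, ha4, ← ha]
      push_cast
      ring
    rw [hT, hderiv1 r hrS, hderiv2, hc2]
    field_simp
    ring
  · -- outer case : d < r * c
    set S : Set ℝ := {ρ | d < ρ * c} with hSdef
    have hSopen : IsOpen S := by
      have : S = (fun ρ => ρ * c) ⁻¹' Set.Ioi d := rfl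
      rw [this]
      exact isOpen_Ioi.preimage (continuous_id.mul continuous_const)
    have hrS : r ∈ S := hgt
    have hU : ∀ ρ ∈ S, u ρ t = 0 := by
      intro ρ hρ
      have hρ' : d < ρ * c := hρ
      have h1 : d ^ 2 - (ρ * c) ^ 2 ≤ 0 := by nlinarith [hd, hρ']
      rw [hu, hF, ← hc, ← ha, max_eq_right h1]
      ring
    have hderiv1 : ∀ ρ ∈ S, deriv (fun ρ' => u ρ' t) ρ = 0 := by
      intro ρ hρ
      have heq : (fun ρ' => u ρ' t) =ᶠ[nhds ρ] fun _ => (0:ℝ) :=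
        Filter.eventuallyEq_of_mem (hSopen.mem_nhds hρ) (fun x hx => hU x hx)
      rw [heq.deriv_eq, deriv_const]
    have hderiv2 : deriv (fun ρ => deriv (fun ρ' => u ρ' t) ρ) r = 0 := by
      have heq : (fun ρ => deriv (fun ρ' => u ρ' t) ρ) =ᶠ[nhds r] fun _ => (0:ℝ) :=
        Filter.eventuallyEq_of_mem (hSopen.mem_nhds hrS) (fun x hx => hderiv1 x hx)
      rw [heq.deriv_eq, deriv_const]
    have hT : deriv (fun s => u r s) t = 0 := by
      have hcont : ContinuousAt (fun s : ℝ => r * s ^ (-(1 / 6) : ℝ)) t :=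
        continuousAt_const.mul (Real.continuousAt_rpow_const t _ (Or.inl ht0))
      have hlt' : (fun _ : ℝ => d) t < (fun s : ℝ => r * s ^ (-(1 / 6) : ℝ)) t := hgt
      have hev := continuousAt_const.eventually_lt hcont hlt'
      have heq : (fun s => u r s) =ᶠ[nhds t] fun _ => (0:ℝ) := by
        filter_upwards [hev] with s hs
        have h1 : d ^ 2 - (r * s ^ (-(1 / 6) : ℝ)) ^ 2 ≤ 0 := by nlinarith [hd, hs]
        rw [hu, hF, max_eq_right h1]
        ring
      rw [heq.deriv_eq, deriv_const]
    rw [hT, hderiv1 r hrS, hderiv2]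
    ring
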